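/- For all positive integers n and p, the two closed-form expressions for the power sum agree: Σ_{j=0}^{p} j! · {p+1, j+1} · C(n, j+1) = Σ_{j=0}^{p} (-1)^{p+j} · j! · {p+1, j+1} · C(n+j+1, j+1), where {p+1, j+1} is the Stirling number of the second kind and C denotes the binomial coefficient (both sides equal Σ_{k=1}^{n} k^p). -/

import Mathlib

/-- Stirling numbers of the second kind. -/
def stirlingSecond : ℕ → ℕ → ℕ
  | 0, 0 => 1
  | 0, _ + 1 => 0
  | _ + 1, 0 => 0
  | n + 1, k + 1 => (k + 1) * stirlingSecond n (k + 1) + stirlingSecond n k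

open Finset

lemma stirlingSecond_eq_zero_of_lt : ∀ n k : ℕ, n < k → stirlingSecond n k = 0
  | 0, _ + 1, _ => rfl
  | n + 1, k + 1, h => by
    rw [stirlingSecond, stirlingSecond_eq_zero_of_lt n (k + 1) (by omega),
      stirlingSecond_eq_zero_of_lt n k (by omega)]
    ring

lemma stirlingSecond_zero_right (n : ℕ) : stirlingSecond (n + 1) 0 = 0 := rfl

/-- Master identity. -/
lemma key (p : ℕ) (x : ℤ) :
    x ^ p = ∑ j ∈ range (p + 1),
      (stirlingSecond (p + 1) (j + 1) : ℤ) * ∏ i ∈ range j, (x - 1 - i) := by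
  induction p with
  | zero => simp [stirlingSecond]
  | succ p ih =>
    have hx : ∀ j : ℕ, x * ∏ i ∈ range j, (x - 1 - i)
        = (∏ i ∈ range (j + 1), (x - 1 - i)) + (j + 1) * ∏ i ∈ range j, (x - 1 - i) := by
      intro j
      rw [prod_range_succ]
      push_cast
      ring
    have h1 : x ^ (p + 1) = ∑ j ∈ range (p + 1),
        ((stirlingSecond (p + 1) (j + 1) : ℤ) * ∏ i ∈ range (j + 1), (x - 1 - i)
          + (j + 1) * stirlingSecond (p + 1) (j + 1) * ∏ i ∈ range j, (x - 1 - i)) := by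
      rw [pow_succ, mul_comm, ih, mul_sum]
      refine sum_congr rfl fun j _ => ?_
      rw [mul_left_comm, hx j]
      ring
    rw [h1, sum_add_distrib]
    have h2 : ∑ j ∈ range (p + 2),
          (stirlingSecond (p + 2) (j + 1) : ℤ) * ∏ i ∈ range j, (x - 1 - i)
        = ∑ j ∈ range (p + 2), (((j : ℤ) + 1) * stirlingSecond (p + 1) (j + 1)
              * ∏ i ∈ range j, (x - 1 - i)
            + (stirlingSecond (p + 1) j : ℤ) * ∏ i ∈ range j, (x - 1 - i)) := by
      refine sum_congr rfl fun j _ => ?_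
      have : stirlingSecond (p + 2) (j + 1) = (j + 1) * stirlingSecond (p + 1) (j + 1)
          + stirlingSecond (p + 1) j := rfl
      rw [this]; push_cast; ring
    rw [h2, sum_add_distrib]
    have hB : ∑ j ∈ range (p + 2),
          ((j : ℤ) + 1) * stirlingSecond (p + 1) (j + 1) * ∏ i ∈ range j, (x - 1 - i)
        = ∑ j ∈ range (p + 1),
          ((j : ℤ) + 1) * stirlingSecond (p + 1) (j + 1) * ∏ i ∈ range j, (x - 1 - i) := by
      rw [sum_range_succ, stirlingSecond_eq_zero_of_lt (p + 1) (p + 2) (by omega)]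
      simp
    have hC : ∑ j ∈ range (p + 2),
          (stirlingSecond (p + 1) j : ℤ) * ∏ i ∈ range j, (x - 1 - i)
        = ∑ j ∈ range (p + 1),
          (stirlingSecond (p + 1) (j + 1) : ℤ) * ∏ i ∈ range (j + 1), (x - 1 - i) := by
      rw [sum_range_succ']
      rw [stirlingSecond_zero_right]
      simp
    rw [hB, hC]
    ring
  
lemma cast_descFactorial (n : ℕ) : ∀ j : ℕ,
    (n.descFactorial j : ℤ) = ∏ i ∈ range j, ((n : ℤ) - i) := by
  intro j
  induction j with
  | zero => simp
  | succ j ih =>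
    rw [prod_range_succ, ← ih, Nat.descFactorial_succ]
    rcases lt_or_ge n j with h | h
    · rw [Nat.descFactorial_eq_zero_iff_lt.2 h]
      simp
    · push_cast [Nat.cast_sub h]
      ring

lemma cast_ascFactorial (n : ℕ) : ∀ j : ℕ,
    ((n + 2).ascFactorial j : ℤ) = ∏ i ∈ range j, ((n : ℤ) + 2 + i) := by
  intro j
  induction j with
  | zero => simp
  | succ j ih =>
    rw [prod_range_succ, ← ih, Nat.ascFactorial_succ]
    push_cast
    ring

lemma prod_neg (j : ℕ) : ∏ i ∈ range j, ((0 : ℤ) - 1 - i) = (-1) ^ j * j.factorial := by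
  induction j with
  | zero => simp
  | succ j ih =>
    rw [prod_range_succ, ih, Nat.factorial_succ, pow_succ]
    push_cast
    ring

lemma lhs_eq (p : ℕ) : ∀ n : ℕ,
    (∑ j ∈ range (p + 1),
        (Nat.factorial j : ℤ) * stirlingSecond (p + 1) (j + 1) * Nat.choose n (j + 1))
      = ∑ k ∈ range n, ((k : ℤ) + 1) ^ p := by
  intro n
  induction n with
  | zero => simp
  | succ n ih =>
    rw [Finset.sum_range_succ (fun k : ℕ => ((k : ℤ) + 1) ^ p) n, ← ih]
    have step : ∀ j ∈ range (p + 1),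
        (Nat.factorial j : ℤ) * stirlingSecond (p + 1) (j + 1) * Nat.choose (n + 1) (j + 1)
        = (Nat.factorial j : ℤ) * stirlingSecond (p + 1) (j + 1) * Nat.choose n (j + 1)
          + (Nat.factorial j : ℤ) * stirlingSecond (p + 1) (j + 1) * Nat.choose n j := by
      intro j _
      rw [Nat.choose_succ_succ]
      push_cast
      ring
    rw [sum_congr rfl step, sum_add_distrib]
    congr 1
    have hk : ((n : ℤ) + 1) ^ p = ∑ j ∈ range (p + 1),
        (stirlingSecond (p + 1) (j + 1) : ℤ) * ∏ i ∈ range j, (((n : ℤ) + 1) - 1 - i) :=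
      key p ((n : ℤ) + 1)
    rw [hk]
    refine sum_congr rfl fun j _ => ?_
    have hprod : ∏ i ∈ range j, (((n : ℤ) + 1) - 1 - i) = ∏ i ∈ range j, ((n : ℤ) - i) :=
      prod_congr rfl fun i _ => by ring
    rw [hprod, ← cast_descFactorial, Nat.descFactorial_eq_factorial_mul_choose]
    push_cast
    ring

lemma rhs_eq (p : ℕ) (hp : 0 < p) : ∀ n : ℕ,
    (∑ j ∈ range (p + 1),
        (-1 : ℤ) ^ (p + j) * Nat.factorial j * stirlingSecond (p + 1) (j + 1) *
          Nat.choose (n + j + 1) (j + 1))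
      = ∑ k ∈ range n, ((k : ℤ) + 1) ^ p := by
  intro n
  induction n with
  | zero =>
    have h0 : (0 : ℤ) ^ p = ∑ j ∈ range (p + 1),
        (stirlingSecond (p + 1) (j + 1) : ℤ) * ∏ i ∈ range j, ((0 : ℤ) - 1 - i) := key p 0
    rw [zero_pow hp.ne'] at h0
    rw [sum_range_zero]
    have hsum : ∑ j ∈ range (p + 1),
        (-1 : ℤ) ^ (p + j) * Nat.factorial j * stirlingSecond (p + 1) (j + 1) *
          Nat.choose (0 + j + 1) (j + 1)
        = (-1 : ℤ) ^ p * ∑ j ∈ range (p + 1),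
            (stirlingSecond (p + 1) (j + 1) : ℤ) * ∏ i ∈ range j, ((0 : ℤ) - 1 - i) := by
      rw [mul_sum]
      refine sum_congr rfl fun j _ => ?_
      have hc : (0 + j + 1).choose (j + 1) = 1 := by simp
      rw [prod_neg, hc, pow_add]
      push_cast
      ring
    rw [hsum, ← h0, mul_zero]
  | succ n ih =>
    rw [Finset.sum_range_succ (fun k : ℕ => ((k : ℤ) + 1) ^ p) n, ← ih]
    have step : ∀ j ∈ range (p + 1),
        (-1 : ℤ) ^ (p + j) * Nat.factorial j * stirlingSecond (p + 1) (j + 1) *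
            Nat.choose (n + 1 + j + 1) (j + 1)
        = (-1 : ℤ) ^ (p + j) * Nat.factorial j * stirlingSecond (p + 1) (j + 1) *
              Nat.choose (n + j + 1) (j + 1)
          + (-1 : ℤ) ^ (p + j) * Nat.factorial j * stirlingSecond (p + 1) (j + 1) *
              Nat.choose (n + j + 1) j := by
      intro j _
      have h : n + 1 + j + 1 = (n + j + 1) + 1 := by omega
      rw [h, Nat.choose_succ_succ]
      push_cast
      ring
    rw [sum_congr rfl step, sum_add_distrib]
    congr 1
    have hkey : (-((n : ℤ) + 1)) ^ p = ∑ j ∈ range (p + 1),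
        (stirlingSecond (p + 1) (j + 1) : ℤ) * ∏ i ∈ range j, ((-((n : ℤ) + 1)) - 1 - i) :=
      key p _
    have hmul : ((n : ℤ) + 1) ^ p = (-1 : ℤ) ^ p * (-((n : ℤ) + 1)) ^ p := by
      rw [← mul_pow]; ring_nf
    rw [hmul, hkey, mul_sum]
    refine sum_congr rfl fun j _ => ?_
    have hprod : ∏ i ∈ range j, ((-((n : ℤ) + 1)) - 1 - i)
        = (-1) ^ j * ∏ i ∈ range j, ((n : ℤ) + 2 + i) := by
      calc ∏ i ∈ range j, ((-((n : ℤ) + 1)) - 1 - i)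
          = ∏ i ∈ range j, ((-1 : ℤ) * ((n : ℤ) + 2 + i)) :=
            prod_congr rfl fun i _ => by ring
        _ = (∏ _i ∈ range j, (-1 : ℤ)) * ∏ i ∈ range j, ((n : ℤ) + 2 + i) :=
            prod_mul_distrib
        _ = (-1) ^ j * ∏ i ∈ range j, ((n : ℤ) + 2 + i) := by
            rw [prod_const, card_range]
    have hasc : ((n + 2).ascFactorial j : ℤ)
        = (Nat.factorial j : ℤ) * Nat.choose (n + 1 + j) j := by
      rw [Nat.ascFactorial_eq_factorial_mul_choose]
      push_cast
      ring
    have hjj : n + 1 + j = n + j + 1 := by omega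
    rw [hprod, ← cast_ascFactorial, hasc, hjj, pow_add]
    push_cast
    ring

theorem power_sum_closed_forms_agree (n p : ℕ) (hn : 0 < n) (hp : 0 < p) :
    (∑ j ∈ Finset.range (p + 1),
        (Nat.factorial j : ℤ) * stirlingSecond (p + 1) (j + 1) * Nat.choose n (j + 1)) =
      ∑ j ∈ Finset.range (p + 1),
        (-1 : ℤ) ^ (p + j) * Nat.factorial j * stirlingSecond (p + 1) (j + 1) *
          Nat.choose (n + j + 1) (j + 1) := by
  rw [lhs_eq p n, rhs_eq p hp n]
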